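/- The conjugation homomorphism from the normalizer N = N_{Aff(3)}(G₆) of G₆ in Aff(3) to Aut(G₆), sending n ∈ N to the automorphism g ↦ ngn⁻¹ of G₆, is an isomorphism of groups (it is injective because the centralizer of G₆ in Aff(3) is trivial, and surjective because every automorphism of the fundamental group of a flat manifold is induced by conjugation in the affine group). -/

import Mathlib

/-! `Aff(3) = ℝ³ ⋊ GL(3,ℝ)`, realized as the group of affine self-equivalences of `ℝ³`
(with multiplication given by composition, so that `(v,A)(w,B) = (v + Aw, AB)`). -/

abbrev V3 : Type := Fin 3 → ℝ
abbrev Aff3 : Type := V3 ≃ᵃ[ℝ] V3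

/-- The linear self-equivalence of `ℝ³` given by a diagonal matrix with entries `±1`. -/
noncomputable def diagLin (d : Fin 3 → ℝ) (hd : ∀ i, d i * d i = 1) : V3 ≃ₗ[ℝ] V3 where
  toFun v := fun i => d i * v i
  invFun v := fun i => d i * v i
  map_add' u v := by funext i; simp [mul_add]
  map_smul' c v := by funext i; simp [smul_eq_mul]; ring
  left_inv v := by funext i; simp [← mul_assoc, hd i]
  right_inv v := by funext i; simp [← mul_assoc, hd i]

lemma sq_one_X : ∀ i, (![(1:ℝ),-1,-1]) i * (![(1:ℝ),-1,-1]) i = 1 := by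
  intro i; fin_cases i <;> norm_num

lemma sq_one_Y : ∀ i, (![(-1:ℝ),1,-1]) i * (![(-1:ℝ),1,-1]) i = 1 := by
  intro i; fin_cases i <;> norm_num

/-- The affine transformation `x = (½e₁, X)`, acting by `w ↦ Xw + ½e₁`,
where `X = diag[1,−1,−1]`. -/
noncomputable def affx : Aff3 :=
  ((diagLin ![1,-1,-1] sq_one_X).toAffineEquiv).trans
    (AffineEquiv.constVAdd ℝ V3 ![1/2, 0, 0])

/-- The affine transformation `y = (½(e₂−e₃), Y)`, acting by `w ↦ Yw + ½(e₂−e₃)`,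
where `Y = diag[−1,1,−1]`. -/
noncomputable def affy : Aff3 :=
  ((diagLin ![-1,1,-1] sq_one_Y).toAffineEquiv).trans
    (AffineEquiv.constVAdd ℝ V3 ![0, 1/2, -1/2])

/-- `z = xy = (½(e₁−e₂+e₃), Z)`. -/
noncomputable def affz : Aff3 := affx * affy

/-- The Hantzsche–Wendt group `G₆`, the subgroup of `Aff(3)` generated by `x` and `y`. -/
noncomputable def G6 : Subgroup Aff3 := Subgroup.closure {affx, affy}

/-- The translation subgroup `T = G₆ ∩ (ℝ³ × {I})`: the elements of `G₆`
whose linear part is the identity. -/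
noncomputable def TT : Subgroup Aff3 :=
  G6 ⊓ (AffineEquiv.linearHom : Aff3 →* (V3 ≃ₗ[ℝ] V3)).ker

lemma affx_mem : affx ∈ G6 := Subgroup.subset_closure (by simp)
lemma affy_mem : affy ∈ G6 := Subgroup.subset_closure (by simp)

/-- `x` as an element of `G₆`. -/
noncomputable def xg : G6 := ⟨affx, affx_mem⟩
/-- `y` as an element of `G₆`. -/
noncomputable def yg : G6 := ⟨affy, affy_mem⟩
/-- `z = xy` as an element of `G₆`. -/
noncomputable def zg : G6 := xg * yg

namespace HW

noncomputable section

/-- diag entries of the four point-group elements I, X, Y, Z -/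
def dvec : Fin 4 → (Fin 3 → ℝ) := ![![1,1,1], ![1,-1,-1], ![-1,1,-1], ![-1,-1,1]]

/-- which coordinates of the translation part are half-integers -/
def hpar : Fin 4 → (Fin 3 → Bool) :=
  ![![false,false,false], ![true,false,false], ![false,true,true], ![true,true,true]]

/-- Klein four-group multiplication table on indices -/
def mul4 (j k : Fin 4) : Fin 4 := ![![0,1,2,3],![1,0,3,2],![2,3,0,1],![3,2,1,0]] j k

lemma dvec_mul : ∀ j k i, dvec (mul4 j k) i = dvec j i * dvec k i := by
  intro j k i
  fin_cases j <;> fin_cases k <;> fin_cases i <;>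
    simp [dvec, mul4, Matrix.vecHead, Matrix.vecTail]

lemma dvec_sq : ∀ j i, dvec j i * dvec j i = 1 := by
  intro j i; fin_cases j <;> fin_cases i <;>
    simp [dvec, Matrix.vecHead, Matrix.vecTail]

lemma dvec_pm : ∀ j i, dvec j i = 1 ∨ dvec j i = -1 := by
  intro j i; fin_cases j <;> fin_cases i <;>
    simp [dvec, Matrix.vecHead, Matrix.vecTail]

lemma hpar_mul : ∀ j k i, hpar (mul4 j k) i = xor (hpar j i) (hpar k i) := by decide

def isInt (r : ℝ) : Prop := ∃ k : ℤ, r = k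
def isHalf (r : ℝ) : Prop := ∃ k : ℤ, r = k + 1/2

/-- parity predicate -/
def par (b : Bool) (r : ℝ) : Prop := if b then isHalf r else isInt r

lemma par_add {b c : Bool} {r s : ℝ} (h : par b r) (h' : par c s) :
    par (xor b c) (r + s) := by
  cases b <;> cases c <;> obtain ⟨k, rfl⟩ := h <;> obtain ⟨m, rfl⟩ := h' <;>
    simp only [par, Bool.xor_false, Bool.xor_true, Bool.false_xor, Bool.true_xor,
      Bool.not_true, Bool.not_false, if_true, if_false, isInt, isHalf]
  · exact ⟨k + m, by push_cast; ring⟩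
  · exact ⟨k + m, by push_cast; ring⟩
  · exact ⟨k + m, by push_cast; ring⟩
  · exact ⟨k + m + 1, by push_cast; ring⟩

lemma par_neg {b : Bool} {r : ℝ} (h : par b r) : par b (-r) := by
  cases b <;> obtain ⟨k, rfl⟩ := h
  · exact ⟨-k, by push_cast; ring⟩
  · exact ⟨-k - 1, by push_cast; ring⟩

lemma par_pm_mul {b : Bool} {d r : ℝ} (hd : d = 1 ∨ d = -1) (h : par b r) :
    par b (d * r) := by
  rcases hd with rfl | rfl
  · simpa using h
  · simpa using par_neg h

lemma par_sub_int {b : Bool} {r s : ℝ} (h : par b r) (h' : par b s) : isInt (r - s) := by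
  cases b <;> obtain ⟨k, rfl⟩ := h <;> obtain ⟨m, rfl⟩ := h' <;>
    exact ⟨k - m, by push_cast; ring⟩

lemma isHalf_ne_zero {r : ℝ} (h : isHalf r) : r ≠ 0 := by
  obtain ⟨k, rfl⟩ := h
  intro hc
  have h2 : (2 * k + 1 : ℝ) = 0 := by linarith
  have h3 : (2 * k + 1 : ℤ) = 0 := by exact_mod_cast h2
  omega

lemma half_sub_int_ne {r s : ℝ} (h : isHalf r) (h' : isInt s) : r - s ≠ 0 := by
  obtain ⟨m, rfl⟩ := h'; obtain ⟨k, rfl⟩ := h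
  exact isHalf_ne_zero ⟨k - m, by push_cast; ring⟩

lemma int_sub_half_ne {r s : ℝ} (h : isInt r) (h' : isHalf s) : r - s ≠ 0 := by
  intro hc
  exact half_sub_int_ne h' h (by linarith)

end

end HW
namespace HW
noncomputable section

/-- every affine equivalence is "linear part + translation part" -/
lemma apply_eq (e : Aff3) (w : V3) : e w = e.linear w + e 0 := by
  have := e.toAffineMap.map_vadd (0 : V3) w
  simpa [vadd_eq_add] using this

lemma mul_apply (e f : Aff3) (w : V3) : (e * f) w = e (f w) := rfl

lemma mul_linear (e f : Aff3) : (e * f).linear = e.linear * f.linear := rfl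

lemma linear_mul_apply (A B : V3 ≃ₗ[ℝ] V3) (v : V3) : (A * B) v = A (B v) := rfl

/-- the coset pattern predicate -/
def patt (j : Fin 4) (g : Aff3) : Prop :=
  (∀ v, g.linear v = fun i => dvec j i * v i) ∧ ∀ i, par (hpar j i) (g 0 i)

lemma patt_one : patt 0 1 := by
  constructor
  · intro v; funext i
    rw [show ((1 : Aff3)).linear v = v from rfl]
    fin_cases i <;> simp [dvec, Matrix.vecHead, Matrix.vecTail]
  · intro i
    have : ((1 : Aff3) 0) i = 0 := rfl
    rw [show hpar 0 i = false from by fin_cases i <;> rfl, this]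
    exact ⟨0, by norm_num⟩

lemma patt_mul {j k : Fin 4} {g h : Aff3} (hg : patt j g) (hh : patt k h) :
    patt (mul4 j k) (g * h) := by
  constructor
  · intro v; funext i
    rw [mul_linear, linear_mul_apply, hh.1, hg.1]
    simp only [dvec_mul]; ring
  · intro i
    have h0 : (g * h) 0 = g.linear (h 0) + g 0 := by
      rw [mul_apply, apply_eq]
    rw [h0]
    have : (g.linear (h 0) + g 0) i = dvec j i * (h 0 i) + g 0 i := by
      rw [hg.1]; rfl
    rw [this, hpar_mul, Bool.xor_comm]
    exact par_add (par_pm_mul (dvec_pm j i) (hh.2 i)) (hg.2 i)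

lemma patt_inv {j : Fin 4} {g : Aff3} (hg : patt j g) : patt j g⁻¹ := by
  have hlin : ∀ v, (g⁻¹).linear v = fun i => dvec j i * v i := by
    intro v
    have : (g⁻¹).linear = g.linear.symm := rfl
    rw [this, LinearEquiv.symm_apply_eq, hg.1]
    funext i
    show v i = dvec j i * (dvec j i * v i)
    rw [← mul_assoc, dvec_sq, one_mul]
  constructor
  · exact hlin
  · intro i
    have h1 : g (g⁻¹ 0) = 0 := g.apply_symm_apply 0
    rw [apply_eq] at h1
    have h2 : g.linear (g⁻¹ 0) = -(g 0) := eq_neg_of_add_eq_zero_left h1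
    have h3 : g⁻¹ 0 = g.linear.symm (-(g 0)) := by
      rw [eq_comm, LinearEquiv.symm_apply_eq]
      exact h2.symm
    have h4 : g.linear.symm (-(g 0)) = fun i => dvec j i * (-(g 0 i)) := by
      rw [LinearEquiv.symm_apply_eq, hg.1]
      funext i
      simp only [Pi.neg_apply]
      rw [← mul_assoc, dvec_sq]; ring
    rw [h3, h4]
    exact par_pm_mul (dvec_pm j i) (par_neg (hg.2 i))

/-- the candidate subgroup -/
def S : Subgroup Aff3 where
  carrier := {g | ∃ j, patt j g}
  one_mem' := ⟨0, patt_one⟩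
  mul_mem' := fun ⟨j, hj⟩ ⟨k, hk⟩ => ⟨mul4 j k, patt_mul hj hk⟩
  inv_mem' := fun ⟨j, hj⟩ => ⟨j, patt_inv hj⟩

lemma patt_affx : patt 1 affx := by
  constructor
  · intro v; funext i
    show (diagLin ![1,-1,-1] sq_one_X) v i = _
    fin_cases i <;> simp [diagLin, dvec, Matrix.vecHead, Matrix.vecTail]
  · intro i
    have h0 : affx 0 = ![1/2, 0, 0] := by
      funext i
      show ![(1:ℝ)/2,0,0] i + (diagLin ![1,-1,-1] sq_one_X) 0 i = _
      simp [diagLin]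
    rw [h0]
    fin_cases i
    · exact ⟨0, by norm_num⟩
    · exact ⟨0, by norm_num [Matrix.vecHead, Matrix.vecTail]⟩
    · exact ⟨0, by norm_num [Matrix.vecHead, Matrix.vecTail]⟩

lemma patt_affy : patt 2 affy := by
  constructor
  · intro v; funext i
    show (diagLin ![-1,1,-1] sq_one_Y) v i = _
    fin_cases i <;> simp [diagLin, dvec, Matrix.vecHead, Matrix.vecTail]
  · intro i
    have h0 : affy 0 = ![0, 1/2, -1/2] := by
      funext i
      show ![(0:ℝ),1/2,-1/2] i + (diagLin ![-1,1,-1] sq_one_Y) 0 i = _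
      simp [diagLin]
    rw [h0]
    fin_cases i
    · exact ⟨0, by norm_num⟩
    · exact ⟨0, by norm_num [Matrix.vecHead, Matrix.vecTail]⟩
    · exact ⟨-1, by norm_num [Matrix.vecHead, Matrix.vecTail]⟩

lemma patt_affz : patt 3 affz := patt_mul patt_affx patt_affy

lemma G6_le_S : G6 ≤ S := by
  rw [G6, Subgroup.closure_le]
  rintro g (rfl | rfl)
  · exact ⟨1, patt_affx⟩
  · exact ⟨2, patt_affy⟩

end
end HW
namespace HW
noncomputable section

/-- translation by `v` -/
def trl (v : V3) : Aff3 := AffineEquiv.constVAdd ℝ V3 v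

lemma trl_apply (v w : V3) : trl v w = v + w := rfl

lemma trl_mul (v w : V3) : trl v * trl w = trl (v + w) :=
  ((AffineEquiv.constVAddHom ℝ V3).map_mul (Multiplicative.ofAdd v) (Multiplicative.ofAdd w)).symm

lemma trl_zpow (v : V3) (m : ℤ) : (trl v) ^ m = trl (m • v) :=
  ((AffineEquiv.constVAddHom ℝ V3).map_zpow (Multiplicative.ofAdd v) m).symm

lemma affx_zero : affx 0 = ![1/2, 0, 0] := by
  funext i
  show ![(1:ℝ)/2,0,0] i + (diagLin ![1,-1,-1] sq_one_X) 0 i = _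
  simp [diagLin]

lemma affy_zero : affy 0 = ![0, 1/2, -1/2] := by
  funext i
  show ![(0:ℝ),1/2,-1/2] i + (diagLin ![-1,1,-1] sq_one_Y) 0 i = _
  simp [diagLin]

lemma affz_zero : affz 0 = ![1/2, -1/2, 1/2] := by
  have : affz 0 = affx.linear (affy 0) + affx 0 := by
    rw [show affz 0 = affx (affy 0) from rfl, apply_eq]
  rw [this, patt_affx.1, affy_zero, affx_zero]
  funext i
  simp only [Pi.add_apply]
  fin_cases i <;> norm_num [dvec, Matrix.vecHead, Matrix.vecTail]

lemma sq_eq_trl {j : Fin 4} {g : Aff3} (hg : patt j g) :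
    g * g = trl (fun i => dvec j i * g 0 i + g 0 i) := by
  apply AffineEquiv.ext
  intro w
  rw [mul_apply, apply_eq g, apply_eq g, hg.1, hg.1, trl_apply]
  funext i
  simp only [Pi.add_apply]
  rw [mul_add, ← mul_assoc, dvec_sq, one_mul]
  ring

lemma affx_sq : affx * affx = trl ![1,0,0] := by
  rw [sq_eq_trl patt_affx, affx_zero]
  congr 1
  funext i
  fin_cases i <;> norm_num [dvec, Matrix.vecHead, Matrix.vecTail]

lemma affy_sq : affy * affy = trl ![0,1,0] := by
  rw [sq_eq_trl patt_affy, affy_zero]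
  congr 1
  funext i
  fin_cases i <;> simp [dvec, Matrix.vecHead, Matrix.vecTail] <;> norm_num

lemma affz_sq : affz * affz = trl ![0,0,1] := by
  rw [sq_eq_trl patt_affz, affz_zero]
  congr 1
  funext i
  fin_cases i <;> simp [dvec, Matrix.vecHead, Matrix.vecTail] <;> norm_num

lemma affz_mem : affz ∈ G6 := mul_mem affx_mem affy_mem

lemma intTrans_mem (m : Fin 3 → ℤ) : trl (fun i => (m i : ℝ)) ∈ G6 := by
  have key : trl (fun i => (m i : ℝ)) =
      (affx * affx) ^ (m 0) * ((affy * affy) ^ (m 1) * (affz * affz) ^ (m 2)) := by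
    rw [affx_sq, affy_sq, affz_sq, trl_zpow, trl_zpow, trl_zpow, trl_mul, trl_mul]
    congr 1
    funext i
    fin_cases i <;>
      simp [Matrix.vecHead, Matrix.vecTail]
  rw [key]
  exact mul_mem (zpow_mem (mul_mem affx_mem affx_mem) _)
    (mul_mem (zpow_mem (mul_mem affy_mem affy_mem) _) (zpow_mem (mul_mem affz_mem affz_mem) _))

/-- coset representatives -/
def rep : Fin 4 → Aff3 := ![1, affx, affy, affz]

lemma patt_rep : ∀ j, patt j (rep j) := by
  intro j
  fin_cases j
  · exact patt_one
  · exact patt_affx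
  · exact patt_affy
  · exact patt_affz

lemma rep_mem (j : Fin 4) : rep j ∈ G6 := by
  fin_cases j
  · exact one_mem _
  · exact affx_mem
  · exact affy_mem
  · exact affz_mem

lemma decomp {j : Fin 4} {g : Aff3} (hg : patt j g) :
    g = trl (fun i => g 0 i - rep j 0 i) * rep j := by
  apply AffineEquiv.ext
  intro w
  rw [mul_apply, trl_apply, apply_eq (rep j) w, (patt_rep j).1, apply_eq g w, hg.1]
  funext i
  simp only [Pi.add_apply]
  ring

lemma S_le_G6 : S ≤ G6 := by
  rintro g ⟨j, hj⟩
  rw [decomp hj]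
  refine mul_mem ?_ (rep_mem j)
  have hint : ∀ i, isInt (g 0 i - rep j 0 i) :=
    fun i => par_sub_int (hj.2 i) ((patt_rep j).2 i)
  choose m hm using hint
  have : (fun i => g 0 i - rep j 0 i) = fun i => (m i : ℝ) := funext hm
  rw [this]
  exact intTrans_mem m

lemma mem_G6_iff (g : Aff3) : g ∈ G6 ↔ ∃ j, patt j g :=
  ⟨fun h => G6_le_S h, fun h => S_le_G6 h⟩

end
end HW
namespace HW
noncomputable section

lemma gen_top : Subgroup.closure ({xg, yg} : Set G6) = ⊤ := by
  rw [eq_top_iff]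
  intro g _
  have h1 : G6 ≤ Subgroup.map G6.subtype (Subgroup.closure {xg, yg}) := by
    have : ({affx, affy} : Set Aff3) ⊆ ↑(Subgroup.map G6.subtype (Subgroup.closure {xg, yg})) := by
      rintro u (rfl | rfl)
      · exact ⟨xg, Subgroup.subset_closure (by simp), rfl⟩
      · exact ⟨yg, Subgroup.subset_closure (by simp), rfl⟩
    exact (Subgroup.closure_le _).2 this
  obtain ⟨h, hh, heq⟩ := h1 g.2
  have : h = g := Subtype.ext heq
  rwa [this] at hh

lemma conj_gens_closure (φ : MulAut G6) :
    Subgroup.closure {((φ xg : G6) : Aff3), ((φ yg : G6) : Aff3)} = G6 := by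
  have h1 : Subgroup.closure ({φ xg, φ yg} : Set G6) = ⊤ := by
    have h := MonoidHom.map_closure φ.toMonoidHom {xg, yg}
    rw [gen_top, Subgroup.map_top_of_surjective _ φ.surjective, Set.image_pair] at h
    simp only [MulEquiv.coe_toMonoidHom] at h
    exact h.symm
  have h2 := MonoidHom.map_closure G6.subtype ({φ xg, φ yg} : Set G6)
  rw [h1, ← MonoidHom.range_eq_map, Subgroup.subtype_range, Set.image_pair] at h2
  exact h2.symm

lemma affy_ne_one : affy ≠ 1 := by
  intro h
  have : affy 0 = 0 := by rw [h]; rfl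
  rw [affy_zero] at this
  have := congrFun this 1
  norm_num [Matrix.vecHead, Matrix.vecTail] at this

lemma affx_ne_one : affx ≠ 1 := by
  intro h
  have : affx 0 = 0 := by rw [h]; rfl
  rw [affx_zero] at this
  have := congrFun this 0
  norm_num at this

/-- +1 position of each nonzero pattern -/
def pos : Fin 4 → Fin 3 := ![0, 0, 1, 2]

lemma pos_spec : ∀ j, j ≠ 0 → dvec j (pos j) = 1 ∧ hpar j (pos j) = true := by
  intro j hj
  fin_cases j
  · exact absurd rfl hj
  · exact ⟨by norm_num [dvec, pos], by decide⟩
  · exact ⟨by norm_num [dvec, pos, Matrix.vecHead, Matrix.vecTail], by decide⟩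
  · exact ⟨by simp [dvec, pos, Matrix.vecHead, Matrix.vecTail], by decide⟩

/-- fourth powers of nontrivial elements of `G6` are nontrivial -/
lemma pow4_ne_one {j : Fin 4} {g : Aff3} (hg : patt j g) (hne : g ≠ 1) :
    (g * g) * (g * g) ≠ 1 := by
  have hsq : g * g = trl (fun i => dvec j i * g 0 i + g 0 i) := sq_eq_trl hg
  set u : V3 := fun i => dvec j i * g 0 i + g 0 i with hu
  have h4 : (g * g) * (g * g) = trl (u + u) := by rw [hsq, trl_mul]
  intro hcon
  rw [h4] at hcon
  have h0 : (u : V3) + u = 0 := by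
    have : trl (u + u) 0 = (1 : Aff3) 0 := by rw [hcon]
    rw [trl_apply] at this
    simpa using this
  by_cases hj : j = 0
  · -- g is a translation; then u = 2 g 0 and g 0 = 0, so g = 1
    subst hj
    have hg0 : g 0 = 0 := by
      funext i
      show g 0 i = (0:ℝ)
      have := congrFun h0 i
      simp only [Pi.add_apply, Pi.zero_apply, hu] at this
      have hd : dvec 0 i = 1 := by fin_cases i <;> norm_num [dvec]
      rw [hd] at this
      linarith
    apply hne
    apply AffineEquiv.ext
    intro w
    rw [apply_eq g w, hg.1, hg0]
    funext i
    have hd : dvec 0 i = 1 := by fin_cases i <;> norm_num [dvec]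
    simp [hd]
  · -- the `pos j` coordinate of u is twice a half-integer
    obtain ⟨hd1, hp1⟩ := pos_spec j hj
    have hpar1 : par true (g 0 (pos j)) := by rw [← hp1]; exact hg.2 (pos j)
    obtain ⟨k, hk⟩ := hpar1
    have := congrFun h0 (pos j)
    simp only [Pi.add_apply, Pi.zero_apply, hu] at this
    rw [hd1, one_mul, hk] at this
    have h2 : (4 * k + 2 : ℝ) = 0 := by linarith
    have h3 : (4 * k + 2 : ℤ) = 0 := by exact_mod_cast h2
    omega

/-- translations commute -/
lemma patt0_comm {g h : Aff3} (hg : patt 0 g) (hh : patt 0 h) : g * h = h * g := by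
  have hid : ∀ (e : Aff3), patt 0 e → ∀ w, e w = w + e 0 := by
    intro e he w
    rw [apply_eq e w, he.1]
    funext i
    have hd : dvec 0 i = 1 := by fin_cases i <;> norm_num [dvec]
    simp [hd]
  apply AffineEquiv.ext
  intro w
  rw [mul_apply, mul_apply, hid g hg (h w), hid h hh w, hid h hh (g w), hid g hg w]
  funext i; simp only [Pi.add_apply]; ring

lemma mul4_self (j : Fin 4) : mul4 j j = 0 := by fin_cases j <;> rfl

/-- the relation `y² x y² = x` -/
lemma rel1 : (affy * affy) * affx * (affy * affy) = affx := by
  rw [affy_sq]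
  apply AffineEquiv.ext
  intro w
  rw [mul_apply, mul_apply, trl_apply, apply_eq affx, apply_eq affx w, patt_affx.1, patt_affx.1,
    trl_apply, affx_zero]
  funext i
  simp only [Pi.add_apply]
  fin_cases i <;> norm_num [dvec, Matrix.vecHead, Matrix.vecTail]

/-- the relation `x² y x² = y` -/
lemma rel2 : (affx * affx) * affy * (affx * affx) = affy := by
  rw [affx_sq]
  apply AffineEquiv.ext
  intro w
  rw [mul_apply, mul_apply, trl_apply, apply_eq affy, apply_eq affy w, patt_affy.1, patt_affy.1,
    trl_apply, affy_zero]
  funext i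
  simp only [Pi.add_apply]
  fin_cases i <;> simp [dvec, Matrix.vecHead, Matrix.vecTail] <;> norm_num

end
end HW
namespace HW
noncomputable section

/-- standard basis vectors -/
def ee (j : Fin 3) : V3 := fun i => if i = j then 1 else 0

lemma key_comm {g : Aff3} {jg : Fin 4} (hg : patt jg g) (n : Aff3)
    (hcomm : n * g = g * n) (w : V3) (i : Fin 3) :
    n.linear ((fun i' => dvec jg i' * w i') + g 0) i + n 0 i
      = dvec jg i * (n.linear w i + n 0 i) + g 0 i := by
  have h : n (g w) = g (n w) := by rw [← mul_apply, hcomm, mul_apply]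
  rw [apply_eq g w, apply_eq n ((g.linear) w + g 0), apply_eq g (n w), apply_eq n w, hg.1, hg.1] at h
  have := congrFun h i
  simpa using this

lemma key_comm' {g : Aff3} {jg : Fin 4} (hg : patt jg g) (n : Aff3)
    (hcomm : n * g = g * n) (j i : Fin 3) :
    dvec jg j * n.linear (ee j) i = dvec jg i * n.linear (ee j) i := by
  have h1 := key_comm hg n hcomm (ee j) i
  have h0 := key_comm hg n hcomm 0 i
  -- subtract
  have e1 : (fun i' => dvec jg i' * (ee j) i') = dvec jg j • ee j := by
    funext i'
    simp only [ee, Pi.smul_apply, smul_eq_mul]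
    by_cases hij : i' = j
    · subst hij; simp
    · simp [hij]
  have e0 : (fun i' => dvec jg i' * (0:V3) i') = (0 : V3) := by
    funext i'; simp
  rw [e1] at h1
  rw [e0, zero_add] at h0
  have hadd : n.linear (dvec jg j • ee j + g 0) = dvec jg j • n.linear (ee j) + n.linear (g 0) := by
    rw [map_add, map_smul]
  rw [hadd] at h1
  simp only [Pi.add_apply, Pi.smul_apply, smul_eq_mul, map_zero, Pi.zero_apply] at h1 h0
  have hnl0 : n.linear 0 i = 0 := by rw [map_zero]; rfl
  -- h0 : n.linear (g 0) i + n 0 i = dvec jg i * (n.linear 0 i + n 0 i) + g 0 i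
  nlinarith [h1, h0, hnl0]

lemma centralizer_trivial (n : Aff3) (hx : n * affx = affx * n) (hy : n * affy = affy * n) :
    n = 1 := by
  set L := n.linear with hL
  set c := n 0 with hc
  -- off-diagonal entries vanish
  have fin3 : ∀ t : Fin 3, t = 0 ∨ t = 1 ∨ t = 2 := by decide
  have offd : ∀ j i : Fin 3, i ≠ j → L (ee j) i = 0 := by
    intro j i hij
    have hX := key_comm' patt_affx n hx j i
    have hY := key_comm' patt_affy n hy j i
    rcases fin3 j with rfl|rfl|rfl <;> rcases fin3 i with rfl|rfl|rfl <;>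
      first
        | exact absurd rfl hij
        | (simp [dvec, Matrix.vecHead, Matrix.vecTail] at hX hY; linarith)
  -- base point equations
  have hEx : ∀ i, L (affx 0) i + c i = dvec 1 i * c i + affx 0 i := by
    intro i
    have h0 := key_comm patt_affx n hx 0 i
    have e0 : (fun i' => dvec 1 i' * (0:V3) i') = (0 : V3) := by funext i'; simp
    rw [e0, zero_add] at h0
    have : L 0 i = 0 := by rw [map_zero]; rfl
    rw [apply_eq n 0] at h0
    simp only [map_zero] at h0
    simpa [this] using h0
  have hEy : ∀ i, L (affy 0) i + c i = dvec 2 i * c i + affy 0 i := by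
    intro i
    have h0 := key_comm patt_affy n hy 0 i
    have e0 : (fun i' => dvec 2 i' * (0:V3) i') = (0 : V3) := by funext i'; simp
    rw [e0, zero_add] at h0
    simp only [map_zero] at h0
    simpa using h0
  -- expand affx 0 and affy 0 in the basis
  have hx0 : affx 0 = (1/2 : ℝ) • ee 0 := by
    rw [affx_zero]; funext i; fin_cases i <;>
      simp [ee, Matrix.vecHead, Matrix.vecTail]
  have hy0 : affy 0 = (1/2 : ℝ) • ee 1 + (-(1/2) : ℝ) • ee 2 := by
    rw [affy_zero]; funext i; fin_cases i <;>
      simp [ee, Matrix.vecHead, Matrix.vecTail] <;> norm_num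
  have hLx0 : ∀ i, L (affx 0) i = (1/2) * L (ee 0) i := by
    intro i; rw [hx0, map_smul]; simp
  have hLy0 : ∀ i, L (affy 0) i = (1/2) * L (ee 1) i - (1/2) * L (ee 2) i := by
    intro i; rw [hy0, map_add, map_smul, map_smul]; simp; ring
  -- c = 0
  have hc1 : c 1 = 0 := by
    have := hEx 1
    rw [hLx0 1, offd 0 1 (by decide), affx_zero] at this
    norm_num [dvec, Matrix.vecHead, Matrix.vecTail] at this
    linarith
  have hc2 : c 2 = 0 := by
    have := hEx 2
    rw [hLx0 2, offd 0 2 (by decide), affx_zero] at this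
    simp [dvec, Matrix.vecHead, Matrix.vecTail] at this
    linarith
  have hc0 : c 0 = 0 := by
    have := hEy 0
    rw [hLy0 0, offd 1 0 (by decide), offd 2 0 (by decide), affy_zero] at this
    simp [dvec, Matrix.vecHead, Matrix.vecTail] at this
    linarith
  -- diagonal entries are 1
  have hd0 : L (ee 0) 0 = 1 := by
    have := hEx 0
    rw [hLx0 0, affx_zero] at this
    norm_num [dvec, Matrix.vecHead, Matrix.vecTail] at this
    linarith
  have hd1 : L (ee 1) 1 = 1 := by
    have := hEy 1
    rw [hLy0 1, offd 2 1 (by decide), affy_zero] at this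
    simp [dvec, Matrix.vecHead, Matrix.vecTail] at this
    linarith
  have hd2 : L (ee 2) 2 = 1 := by
    have := hEy 2
    rw [hLy0 2, offd 1 2 (by decide), affy_zero, hc2] at this
    simp [dvec, Matrix.vecHead, Matrix.vecTail] at this
    linarith
  -- L is the identity
  have hLee : ∀ j, L (ee j) = ee j := by
    intro j
    funext i
    by_cases hij : i = j
    · subst hij
      fin_cases i <;> simp_all [ee]
    · rw [offd j i hij]
      simp [ee, hij]
  have hLw : ∀ w : V3, L w = w := by
    intro w
    have hw : w = w 0 • ee 0 + w 1 • ee 1 + w 2 • ee 2 := by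
      funext i; fin_cases i <;> simp [ee]
    rw [hw, map_add, map_add, map_smul, map_smul, map_smul, hLee 0, hLee 1, hLee 2]
  -- conclude
  have hcz : c = 0 := by
    funext i; fin_cases i
    · exact hc0
    · exact hc1
    · exact hc2
  apply AffineEquiv.ext
  intro w
  rw [apply_eq n w, hLw, ← hc, hcz]
  simp only [add_zero]
  rfl

end
end HW
namespace HW
noncomputable section

/-- monomial linear equivalence: `(A v) i = c i * v (π i)` -/
def monLin (c : Fin 3 → ℝ) (hc : ∀ i, c i ≠ 0) (π : Equiv.Perm (Fin 3)) : V3 ≃ₗ[ℝ] V3 where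
  toFun v := fun i => c i * v (π i)
  invFun w := fun k => (c (π.symm k))⁻¹ * w (π.symm k)
  map_add' u v := by funext i; simp [mul_add]
  map_smul' r v := by funext i; simp [smul_eq_mul]; ring
  left_inv v := by
    funext k
    simp only
    rw [Equiv.apply_symm_apply, inv_mul_cancel_left₀ (hc (π.symm k))]
  right_inv w := by
    funext i
    simp only
    rw [Equiv.symm_apply_apply, mul_inv_cancel_left₀ (hc i)]

/-- conjugator construction: given suitable data, produce `n` with
`n x n⁻¹ = a` and `n y n⁻¹ = b`. -/
lemma conj_exists {ja jb : Fin 4} {a b : Aff3} (π : Equiv.Perm (Fin 3))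
    (ha : patt ja a) (hb : patt jb b)
    (hπa : ∀ i, dvec ja i = dvec 1 (π i))
    (hπb : ∀ i, dvec jb i = dvec 2 (π i))
    (hcne : ∀ i, (if π i = 0 then 2 * a 0 i
      else if π i = 1 then 2 * b 0 i else 2 * (a 0 i - b 0 i)) ≠ 0) :
    ∃ n : Aff3, n * affx = a * n ∧ n * affy = b * n := by
  set cc : Fin 3 → ℝ := fun i => if π i = 0 then 2 * a 0 i
      else if π i = 1 then 2 * b 0 i else 2 * (a 0 i - b 0 i) with hcc
  set vv : V3 := fun i => if π i = 0 then b 0 i / 2 else a 0 i / 2 with hvv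
  set A := monLin cc hcne π with hA
  set n : Aff3 := (A.toAffineEquiv).trans (AffineEquiv.constVAdd ℝ V3 vv) with hn
  have hnapp : ∀ w, n w = fun i => cc i * w (π i) + vv i := by
    intro w; funext i
    show vv i + A w i = _
    rw [hA]
    show vv i + cc i * w (π i) = _
    ring
  have fin3 : ∀ t : Fin 3, t = 0 ∨ t = 1 ∨ t = 2 := by decide
  refine ⟨n, ?_, ?_⟩
  · apply AffineEquiv.ext
    intro w
    rw [mul_apply, mul_apply, hnapp w, apply_eq affx w, patt_affx.1, affx_zero,
      apply_eq a _, ha.1, hnapp _]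
    funext i
    simp only [Pi.add_apply]
    rw [hπa i]
    rcases fin3 (π i) with h | h | h <;> rw [h] <;>
      simp [dvec, Matrix.vecHead, Matrix.vecTail, hcc, hvv, h] <;> try ring
  · apply AffineEquiv.ext
    intro w
    rw [mul_apply, mul_apply, hnapp w, apply_eq affy w, patt_affy.1, affy_zero,
      apply_eq b _, hb.1, hnapp _]
    funext i
    simp only [Pi.add_apply]
    rw [hπb i]
    rcases fin3 (π i) with h | h | h <;> rw [h] <;>
      simp [dvec, Matrix.vecHead, Matrix.vecTail, hcc, hvv, h] <;> try ring

end
end HW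
namespace HW
noncomputable section

lemma G6_coe_mul (g h : G6) : ((g * h : G6) : Aff3) = (g : Aff3) * (h : Aff3) := rfl

lemma phi_y_ne_one (φ : MulAut G6) : ((φ yg : G6) : Aff3) ≠ 1 := by
  intro h
  have h1 : φ yg = 1 := Subtype.ext h
  have h2 : yg = 1 := by
    have := φ.injective (h1.trans (map_one φ.toMonoidHom).symm)
    simpa using this
  exact affy_ne_one (congrArg Subtype.val h2)

lemma phi_x_ne_one (φ : MulAut G6) : ((φ xg : G6) : Aff3) ≠ 1 := by
  intro h
  have h1 : φ xg = 1 := Subtype.ext h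
  have h2 : xg = 1 := by
    have := φ.injective (h1.trans (map_one φ.toMonoidHom).symm)
    simpa using this
  exact affx_ne_one (congrArg Subtype.val h2)

lemma ja_ne_zero {ja jb : Fin 4} (φ : MulAut G6)
    (ha : patt ja ((φ xg : G6) : Aff3)) (hb : patt jb ((φ yg : G6) : Aff3)) : ja ≠ 0 := by
  intro h0
  subst h0
  set a : Aff3 := ((φ xg : G6) : Aff3) with hadef
  set b : Aff3 := ((φ yg : G6) : Aff3) with hbdef
  -- the relation y²xy² = x transported by φ
  have hrelG : (yg * yg) * xg * (yg * yg) = xg := Subtype.ext rel1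
  have hrel : (b * b) * a * (b * b) = a := by
    have := congrArg (fun g => ((φ g : G6) : Aff3)) hrelG
    simpa only [map_mul, G6_coe_mul] using this
  have hb2 : patt 0 (b * b) := by
    have := patt_mul hb hb
    rwa [mul4_self] at this
  have hcomm : a * (b * b) = (b * b) * a := patt0_comm ha hb2
  have hkey : ((b * b) * (b * b)) * a = a := by
    calc ((b * b) * (b * b)) * a = (b * b) * ((b * b) * a) := by group
    _ = (b * b) * (a * (b * b)) := by rw [hcomm]
    _ = (b * b) * a * (b * b) := by group
    _ = a := hrel
  have h4 : (b * b) * (b * b) = 1 := by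
    have : ((b * b) * (b * b)) * a = 1 * a := by rw [hkey, one_mul]
    exact mul_right_cancel this
  exact pow4_ne_one hb (phi_y_ne_one φ) h4

lemma jb_ne_zero {ja jb : Fin 4} (φ : MulAut G6)
    (ha : patt ja ((φ xg : G6) : Aff3)) (hb : patt jb ((φ yg : G6) : Aff3)) : jb ≠ 0 := by
  intro h0
  subst h0
  set a : Aff3 := ((φ xg : G6) : Aff3) with hadef
  set b : Aff3 := ((φ yg : G6) : Aff3) with hbdef
  have hrelG : (xg * xg) * yg * (xg * xg) = yg := Subtype.ext rel2
  have hrel : (a * a) * b * (a * a) = b := by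
    have := congrArg (fun g => ((φ g : G6) : Aff3)) hrelG
    simpa only [map_mul, G6_coe_mul] using this
  have ha2 : patt 0 (a * a) := by
    have := patt_mul ha ha
    rwa [mul4_self] at this
  have hcomm : b * (a * a) = (a * a) * b := patt0_comm hb ha2
  have hkey : ((a * a) * (a * a)) * b = b := by
    calc ((a * a) * (a * a)) * b = (a * a) * ((a * a) * b) := by group
    _ = (a * a) * (b * (a * a)) := by rw [hcomm]
    _ = (a * a) * b * (a * a) := by group
    _ = b := hrel
  have h4 : (a * a) * (a * a) = 1 := by
    have : ((a * a) * (a * a)) * b = 1 * b := by rw [hkey, one_mul]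
    exact mul_right_cancel this
  exact pow4_ne_one ha (phi_x_ne_one φ) h4

lemma lin_inv_diag {g : Aff3} {d : Fin 3 → ℝ} (hd : ∀ i, d i * d i = 1)
    (h : ∀ v, g.linear v = fun i => d i * v i) :
    ∀ v, (g⁻¹).linear v = fun i => d i * v i := by
  intro v
  have heq : (g⁻¹).linear = g.linear.symm := rfl
  rw [heq, LinearEquiv.symm_apply_eq, h]
  funext i
  show v i = d i * (d i * v i)
  rw [← mul_assoc, hd i, one_mul]

lemma ja_ne_jb {ja jb : Fin 4} (φ : MulAut G6)
    (ha : patt ja ((φ xg : G6) : Aff3)) (hb : patt jb ((φ yg : G6) : Aff3)) : ja ≠ jb := by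
  intro h0
  subst h0
  set a : Aff3 := ((φ xg : G6) : Aff3) with hadef
  set b : Aff3 := ((φ yg : G6) : Aff3) with hbdef
  have hcl : Subgroup.closure {a, b} = G6 := conj_gens_closure φ
  set R : Aff3 → Prop :=
    fun g => (∀ v, g.linear v = v) ∨ (∀ v, g.linear v = fun i => dvec ja i * v i) with hR
  have hRall : ∀ g ∈ Subgroup.closure ({a, b} : Set Aff3), R g := by
    intro g hg
    induction hg using Subgroup.closure_induction with
    | mem u hu =>
      rcases hu with rfl | rfl
      · exact Or.inr ha.1
      · exact Or.inr hb.1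
    | one => exact Or.inl (fun v => rfl)
    | mul u w hu hw hRu hRw =>
      have hmul : ∀ v, (u * w).linear v = u.linear (w.linear v) := fun v => rfl
      rcases hRu with h1 | h1 <;> rcases hRw with h2 | h2
      · exact Or.inl (fun v => by rw [hmul, h2, h1])
      · exact Or.inr (fun v => by rw [hmul, h2, h1])
      · exact Or.inr (fun v => by rw [hmul, h2, h1])
      · exact Or.inl (fun v => by
          rw [hmul, h2, h1]
          funext i
          show dvec ja i * (dvec ja i * v i) = v i
          rw [← mul_assoc, dvec_sq, one_mul])
    | inv u hu hRu =>
      rcases hRu with h1 | h1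
      · refine Or.inl (fun v => ?_)
        have heq : (u⁻¹).linear = u.linear.symm := rfl
        rw [heq, LinearEquiv.symm_apply_eq, h1]
      · exact Or.inr (lin_inv_diag (dvec_sq ja) h1)
  have hx' : R affx := hRall affx (by rw [hcl]; exact affx_mem)
  have hy' : R affy := hRall affy (by rw [hcl]; exact affy_mem)
  have hdx : ∀ i, dvec 1 i = dvec ja i := by
    rcases hx' with h1 | h1
    · exfalso
      have := congrFun ((patt_affx.1 (ee 1)).symm.trans (h1 (ee 1))) 1
      norm_num [ee, dvec, Matrix.vecHead, Matrix.vecTail] at this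
    · intro i
      have := congrFun ((patt_affx.1 (fun _ => 1)).symm.trans (h1 (fun _ => 1))) i
      simpa using this
  have hdy : ∀ i, dvec 2 i = dvec ja i := by
    rcases hy' with h1 | h1
    · exfalso
      have := congrFun ((patt_affy.1 (ee 0)).symm.trans (h1 (ee 0))) 0
      simp [ee, dvec, Matrix.vecHead, Matrix.vecTail] at this <;> norm_num at this
    · intro i
      have := congrFun ((patt_affy.1 (fun _ => 1)).symm.trans (h1 (fun _ => 1))) i
      simpa using this
  have : dvec 1 0 = dvec 2 0 := (hdx 0).trans (hdy 0).symm
  simp [dvec, Matrix.vecHead, Matrix.vecTail] at this <;> norm_num at this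

end
end HW
namespace HW
noncomputable section

lemma patt_half {j : Fin 4} {g : Aff3} {i : Fin 3} (h : patt j g) (hh : hpar j i = true) :
    isHalf (g 0 i) := by
  have := h.2 i; rwa [hh] at this

lemma patt_int {j : Fin 4} {g : Aff3} {i : Fin 3} (h : patt j g) (hh : hpar j i = false) :
    isInt (g 0 i) := by
  have := h.2 i; rwa [hh] at this

lemma conj_dispatch {ja jb : Fin 4} {a b : Aff3} (ha : patt ja a) (hb : patt jb b)
    (hja : ja ≠ 0) (hjb : jb ≠ 0) (hjj : ja ≠ jb) :
    ∃ n : Aff3, n * affx = a * n ∧ n * affy = b * n := by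
  have fin4 : ∀ t : Fin 4, t = 0 ∨ t = 1 ∨ t = 2 ∨ t = 3 := by decide
  have fin3 : ∀ t : Fin 3, t = 0 ∨ t = 1 ∨ t = 2 := by decide
  rcases fin4 ja with rfl|rfl|rfl|rfl
  · exact absurd rfl hja
  · rcases fin4 jb with rfl|rfl|rfl|rfl
    · exact absurd rfl hjb
    · exact absurd rfl hjj
    · -- (X, Y), π = id
      refine conj_exists ⟨![0,1,2], ![0,1,2], by decide, by decide⟩ ha hb ?_ ?_ ?_
      · intro i
        rcases fin3 i with rfl|rfl|rfl <;>
          simp [dvec, Equiv.coe_fn_mk, Matrix.vecHead, Matrix.vecTail]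
      · intro i
        rcases fin3 i with rfl|rfl|rfl <;>
          simp [dvec, Equiv.coe_fn_mk, Matrix.vecHead, Matrix.vecTail]
      · intro i
        rcases fin3 i with rfl|rfl|rfl <;>
          simp only [Equiv.coe_fn_mk, Matrix.cons_val_zero, Matrix.cons_val_one,
            Matrix.head_cons, Matrix.cons_val_two, Matrix.tail_cons] <;>
          norm_num
        · exact isHalf_ne_zero (patt_half ha (i := 0) (by decide))
        · exact isHalf_ne_zero (patt_half hb (i := 1) (by decide))
        · exact mul_ne_zero two_ne_zero (int_sub_half_ne (patt_int ha (i := 2) (by decide))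
            (patt_half hb (i := 2) (by decide)))
    · -- (X,Z), π = ![0,2,1]
      refine conj_exists ⟨![0,2,1], ![0,2,1], by decide, by decide⟩ ha hb ?_ ?_ ?_
      · intro i
        rcases fin3 i with rfl|rfl|rfl <;>
          simp [dvec, Equiv.coe_fn_mk, Matrix.vecHead, Matrix.vecTail]
      · intro i
        rcases fin3 i with rfl|rfl|rfl <;>
          simp [dvec, Equiv.coe_fn_mk, Matrix.vecHead, Matrix.vecTail]
      · intro i
        rcases fin3 i with rfl|rfl|rfl <;>
          simp only [Equiv.coe_fn_mk, Matrix.cons_val_zero, Matrix.cons_val_one,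
            Matrix.head_cons, Matrix.cons_val_two, Matrix.tail_cons] <;>
          norm_num
        · exact isHalf_ne_zero (patt_half ha (i := 0) (by decide))
        · exact mul_ne_zero two_ne_zero (int_sub_half_ne (patt_int ha (i := 1) (by decide))
            (patt_half hb (i := 1) (by decide)))
        · exact isHalf_ne_zero (patt_half hb (i := 2) (by decide))
  · rcases fin4 jb with rfl|rfl|rfl|rfl
    · exact absurd rfl hjb
    · -- (Y,X), π = ![1,0,2]
      refine conj_exists ⟨![1,0,2], ![1,0,2], by decide, by decide⟩ ha hb ?_ ?_ ?_
      · intro i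
        rcases fin3 i with rfl|rfl|rfl <;>
          simp [dvec, Equiv.coe_fn_mk, Matrix.vecHead, Matrix.vecTail]
      · intro i
        rcases fin3 i with rfl|rfl|rfl <;>
          simp [dvec, Equiv.coe_fn_mk, Matrix.vecHead, Matrix.vecTail]
      · intro i
        rcases fin3 i with rfl|rfl|rfl <;>
          simp only [Equiv.coe_fn_mk, Matrix.cons_val_zero, Matrix.cons_val_one,
            Matrix.head_cons, Matrix.cons_val_two, Matrix.tail_cons] <;>
          norm_num
        · exact isHalf_ne_zero (patt_half hb (i := 0) (by decide))
        · exact isHalf_ne_zero (patt_half ha (i := 1) (by decide))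
        · exact mul_ne_zero two_ne_zero (half_sub_int_ne (patt_half ha (i := 2) (by decide))
            (patt_int hb (i := 2) (by decide)))
    · exact absurd rfl hjj
    · -- (Y,Z), π = ![2,0,1]
      refine conj_exists ⟨![2,0,1], ![1,2,0], by decide, by decide⟩ ha hb ?_ ?_ ?_
      · intro i
        rcases fin3 i with rfl|rfl|rfl <;>
          simp [dvec, Equiv.coe_fn_mk, Matrix.vecHead, Matrix.vecTail]
      · intro i
        rcases fin3 i with rfl|rfl|rfl <;>
          simp [dvec, Equiv.coe_fn_mk, Matrix.vecHead, Matrix.vecTail]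
      · intro i
        rcases fin3 i with rfl|rfl|rfl <;>
          simp only [Equiv.coe_fn_mk, Matrix.cons_val_zero, Matrix.cons_val_one,
            Matrix.head_cons, Matrix.cons_val_two, Matrix.tail_cons] <;>
          norm_num
        · exact mul_ne_zero two_ne_zero (int_sub_half_ne (patt_int ha (i := 0) (by decide))
            (patt_half hb (i := 0) (by decide)))
        · exact isHalf_ne_zero (patt_half ha (i := 1) (by decide))
        · exact isHalf_ne_zero (patt_half hb (i := 2) (by decide))
  · rcases fin4 jb with rfl|rfl|rfl|rfl
    · exact absurd rfl hjb
    · -- (Z,X), π = ![1,2,0]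
      refine conj_exists ⟨![1,2,0], ![2,0,1], by decide, by decide⟩ ha hb ?_ ?_ ?_
      · intro i
        rcases fin3 i with rfl|rfl|rfl <;>
          simp [dvec, Equiv.coe_fn_mk, Matrix.vecHead, Matrix.vecTail]
      · intro i
        rcases fin3 i with rfl|rfl|rfl <;>
          simp [dvec, Equiv.coe_fn_mk, Matrix.vecHead, Matrix.vecTail]
      · intro i
        rcases fin3 i with rfl|rfl|rfl <;>
          simp only [Equiv.coe_fn_mk, Matrix.cons_val_zero, Matrix.cons_val_one,
            Matrix.head_cons, Matrix.cons_val_two, Matrix.tail_cons] <;>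
          norm_num
        · exact isHalf_ne_zero (patt_half hb (i := 0) (by decide))
        · exact mul_ne_zero two_ne_zero (half_sub_int_ne (patt_half ha (i := 1) (by decide))
            (patt_int hb (i := 1) (by decide)))
        · exact isHalf_ne_zero (patt_half ha (i := 2) (by decide))
    · -- (Z,Y), π = ![2,1,0]
      refine conj_exists ⟨![2,1,0], ![2,1,0], by decide, by decide⟩ ha hb ?_ ?_ ?_
      · intro i
        rcases fin3 i with rfl|rfl|rfl <;>
          simp [dvec, Equiv.coe_fn_mk, Matrix.vecHead, Matrix.vecTail]
      · intro i
        rcases fin3 i with rfl|rfl|rfl <;>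
          simp [dvec, Equiv.coe_fn_mk, Matrix.vecHead, Matrix.vecTail]
      · intro i
        rcases fin3 i with rfl|rfl|rfl <;>
          simp only [Equiv.coe_fn_mk, Matrix.cons_val_zero, Matrix.cons_val_one,
            Matrix.head_cons, Matrix.cons_val_two, Matrix.tail_cons] <;>
          norm_num
        · exact mul_ne_zero two_ne_zero (half_sub_int_ne (patt_half ha (i := 0) (by decide))
            (patt_int hb (i := 0) (by decide)))
        · exact isHalf_ne_zero (patt_half hb (i := 1) (by decide))
        · exact isHalf_ne_zero (patt_half ha (i := 2) (by decide))
    · exact absurd rfl hjj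

end
end HW
namespace HW
noncomputable section

/-- conjugation automorphism of `G6` by an element of the normalizer -/
def conjAut (n : (Subgroup.normalizer (G6 : Set Aff3))) : MulAut G6 where
  toFun g := ⟨(n : Aff3) * g * (n : Aff3)⁻¹, (Subgroup.mem_normalizer_iff.mp n.2 g).mp g.2⟩
  invFun g := ⟨(n : Aff3)⁻¹ * g * (n : Aff3), by
    have h := (Subgroup.mem_normalizer_iff.mp n.2 ((n : Aff3)⁻¹ * g * (n : Aff3))).mpr
    apply h
    have heq : (n : Aff3) * ((n : Aff3)⁻¹ * g * (n : Aff3)) * (n : Aff3)⁻¹ = g := by group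
    rw [heq]
    exact g.2⟩
  left_inv g := Subtype.ext (by simp only; group)
  right_inv g := Subtype.ext (by simp only; group)
  map_mul' g h := Subtype.ext (by simp only [G6_coe_mul]; group)

/-- the conjugation homomorphism -/
def Phi : (Subgroup.normalizer (G6 : Set Aff3)) →* MulAut G6 where
  toFun := conjAut
  map_one' := by
    apply MulEquiv.ext
    intro g
    apply Subtype.ext
    show ((1 : (Subgroup.normalizer (G6 : Set Aff3))) : Aff3) * g * ((1 : (Subgroup.normalizer (G6 : Set Aff3))) : Aff3)⁻¹ = (g : Aff3)
    simp
  map_mul' m n := by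
    apply MulEquiv.ext
    intro g
    apply Subtype.ext
    show ((m * n : (Subgroup.normalizer (G6 : Set Aff3))) : Aff3) * g * ((m * n : (Subgroup.normalizer (G6 : Set Aff3))) : Aff3)⁻¹
      = (m : Aff3) * ((n : Aff3) * g * (n : Aff3)⁻¹) * (m : Aff3)⁻¹
    rw [Subgroup.coe_mul]
    group

lemma Phi_injective : Function.Injective Phi := by
  rw [injective_iff_map_eq_one]
  intro n hn
  have h1 : ∀ g : G6, ((Phi n g : G6) : Aff3) = (g : Aff3) := by
    intro g
    rw [hn]
    rfl
  have hx : (n : Aff3) * affx * (n : Aff3)⁻¹ = affx := h1 xg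
  have hy : (n : Aff3) * affy * (n : Aff3)⁻¹ = affy := h1 yg
  rw [mul_inv_eq_iff_eq_mul] at hx hy
  exact Subtype.ext (centralizer_trivial _ hx hy)

lemma Phi_surjective : Function.Surjective Phi := by
  intro φ
  obtain ⟨ja, ha⟩ := (mem_G6_iff _).1 (φ xg).2
  obtain ⟨jb, hb⟩ := (mem_G6_iff _).1 (φ yg).2
  obtain ⟨n, hnx, hny⟩ :=
    conj_dispatch ha hb (ja_ne_zero φ ha hb) (jb_ne_zero φ ha hb) (ja_ne_jb φ ha hb)
  have e1 : n * affx * n⁻¹ = ((φ xg : G6) : Aff3) := by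
    rw [mul_inv_eq_iff_eq_mul]; exact hnx
  have e2 : n * affy * n⁻¹ = ((φ yg : G6) : Aff3) := by
    rw [mul_inv_eq_iff_eq_mul]; exact hny
  have hmap : Subgroup.map (MulAut.conj n).toMonoidHom G6 = G6 := by
    rw [show G6 = Subgroup.closure {affx, affy} from rfl, MonoidHom.map_closure, Set.image_pair]
    have c1 : (MulAut.conj n).toMonoidHom affx = ((φ xg : G6) : Aff3) := by
      simpa [MulAut.conj_apply] using e1
    have c2 : (MulAut.conj n).toMonoidHom affy = ((φ yg : G6) : Aff3) := by
      simpa [MulAut.conj_apply] using e2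
    rw [c1, c2]
    exact conj_gens_closure φ
  have hnorm : n ∈ (Subgroup.normalizer (G6 : Set Aff3)) := by
    rw [Subgroup.mem_normalizer_iff]
    intro h
    constructor
    · intro hh
      have : (MulAut.conj n).toMonoidHom h ∈ Subgroup.map (MulAut.conj n).toMonoidHom G6 :=
        ⟨h, hh, rfl⟩
      rw [hmap] at this
      simpa [MulAut.conj_apply] using this
    · intro hh
      have hmem : n * h * n⁻¹ ∈ Subgroup.map (MulAut.conj n).toMonoidHom G6 := by
        rw [hmap]; exact hh
      obtain ⟨h', hh', heq⟩ := hmem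
      have heq' : n * h' * n⁻¹ = n * h * n⁻¹ := by
        simpa [MulAut.conj_apply] using heq
      have : h' = h := by
        have := mul_right_cancel heq'
        exact mul_left_cancel this
      rwa [← this]
  refine ⟨⟨n, hnorm⟩, ?_⟩
  apply MulEquiv.ext
  intro g
  have hg : g ∈ Subgroup.closure ({xg, yg} : Set G6) := by rw [gen_top]; trivial
  induction hg using Subgroup.closure_induction with
  | mem u hu =>
    rcases hu with rfl | rfl
    · exact Subtype.ext e1
    · exact Subtype.ext e2
  | one => rw [map_one, map_one]
  | mul u w _ _ h1 h2 => rw [map_mul, map_mul, h1, h2]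
  | inv u _ h1 => rw [map_inv, map_inv, h1]

end
end HW

/-- The conjugation homomorphism from the normalizer `N = N_{Aff(3)}(G₆)`
to `Aut(G₆)`, sending `n ∈ N` to the automorphism `g ↦ ngn⁻¹` of `G₆`, is an
isomorphism of groups. -/
theorem statement6 :
    ∃ Φ : (Subgroup.normalizer (G6 : Set Aff3)) →* MulAut G6,
      (∀ (n : (Subgroup.normalizer (G6 : Set Aff3))) (g : G6), ((Φ n g : G6) : Aff3) = n * g * (n : Aff3)⁻¹) ∧
      Function.Bijective Φ :=
  ⟨HW.Phi, fun _ _ => rfl, HW.Phi_injective, HW.Phi_surjective⟩
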